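/- arXiv:2105.13056 — 6 statements merged into one kernel-verified Lean document; each statement's English description precedes it below -/
import Mathlib

section
/- Let T > 0, h ∈ C([0,T]) with h(0) = h₀ > 0 and h nondecreasing, let d > 0, let J satisfy condition (J), and let c be bounded on D = {(t,x) : 0 < t ≤ T, 0 ≤ x < h(t)}. Suppose ψ and ψ_t are continuous on the closure of D, ψ_t(t,x) ≥ d ∫_0^{h(t)} J(x−y) ψ(t,y) dy + c(t,x) ψ(t,x) for (t,x) ∈ D, ψ(t,h(t)) ≥ 0 for 0 < t ≤ T, and ψ(0,x) ≥ 0 for 0 ≤ x ≤ h₀. Then ψ ≥ 0 on the closure of D. -/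
open MeasureTheory Filter Set intervalIntegral Topology

/-- Maximum principle, Lemma 2.1: with a nondecreasing moving
boundary h and bounded coefficient c, a supersolution ψ of the nonlocal
equation that is nonnegative on the parabolic boundary is nonnegative on the
closure of D = {(t,x) : 0 < t ≤ T, 0 ≤ x < h(t)}. -/
theorem stmt4 (T h₀ d : ℝ) (hT : 0 < T) (hh₀ : 0 < h₀)
    (h : ℝ → ℝ) (hhc : ContinuousOn h (Icc 0 T)) (hh0 : h 0 = h₀)
    (hhmono : MonotoneOn h (Icc 0 T)) (hd : 0 < d)
    (J : ℝ → ℝ)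
    (hJc : Continuous J) (hJnn : ∀ x, 0 ≤ J x) (hJ0 : 0 < J 0)
    (hJeven : ∀ x, J (-x) = J x)
    (hJint : Integrable J) (hJ1 : ∫ x, J x = 1)
    (c : ℝ → ℝ → ℝ)
    (hcbdd : ∃ M, ∀ t ∈ Ioc 0 T, ∀ x ∈ Ico 0 (h t), |c t x| ≤ M)
    (ψ ψt : ℝ → ℝ → ℝ)
    (hψcont : ContinuousOn (fun p : ℝ × ℝ => ψ p.1 p.2)
      {p : ℝ × ℝ | p.1 ∈ Icc 0 T ∧ p.2 ∈ Icc 0 (h p.1)})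
    (hψtcont : ContinuousOn (fun p : ℝ × ℝ => ψt p.1 p.2)
      {p : ℝ × ℝ | p.1 ∈ Icc 0 T ∧ p.2 ∈ Icc 0 (h p.1)})
    (hderiv : ∀ t ∈ Icc 0 T, ∀ x ∈ Icc 0 (h t),
      HasDerivAt (fun s => ψ s x) (ψt t x) t)
    (hineq : ∀ t ∈ Ioc 0 T, ∀ x ∈ Ico 0 (h t),
      d * (∫ y in (0:ℝ)..(h t), J (x - y) * ψ t y) + c t x * ψ t x ≤ ψt t x)
    (hbd : ∀ t ∈ Ioc 0 T, 0 ≤ ψ t (h t))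
    (hinit : ∀ x ∈ Icc 0 h₀, 0 ≤ ψ 0 x) :
    ∀ t ∈ Icc 0 T, ∀ x ∈ Icc 0 (h t), 0 ≤ ψ t x := by
  by_contra hcon
  push_neg at hcon
  obtain ⟨t₁, ht₁, x₁, hx₁, hneg⟩ := hcon
  obtain ⟨M₀, hM₀⟩ := hcbdd
  set M : ℝ := max M₀ 0 with hMdef
  have hMnn : 0 ≤ M := le_max_right _ _
  have hMbd : ∀ t ∈ Ioc 0 T, ∀ x ∈ Ico 0 (h t), |c t x| ≤ M := fun t ht x hx =>
    (hM₀ t ht x hx).trans (le_max_left _ _)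
  set k : ℝ := d + M + 1 with hkdef
  set K : Set (ℝ × ℝ) := {p : ℝ × ℝ | p.1 ∈ Icc 0 T ∧ p.2 ∈ Icc 0 (h p.1)} with hKdef
  -- K is closed
  have hKeq : K = (Icc 0 T ×ˢ Ici (0:ℝ)) ∩ (fun p : ℝ × ℝ => h p.1 - p.2) ⁻¹' Ici 0 := by
    ext p
    simp only [hKdef, mem_setOf_eq, mem_inter_iff, mem_prod, mem_preimage, mem_Ici, mem_Icc,
      sub_nonneg]
    tauto
  have hKclosed : IsClosed K := by
    rw [hKeq]
    exact ContinuousOn.preimage_isClosed_of_isClosed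
      (((hhc.comp continuous_fst.continuousOn (fun p hp => hp.1)).sub
        continuous_snd.continuousOn))
      (isClosed_Icc.prod isClosed_Ici) isClosed_Ici
  have hKsub : K ⊆ Icc 0 T ×ˢ Icc 0 (h T) := by
    rintro p ⟨hp1, hp2⟩
    exact ⟨hp1, hp2.1, hp2.2.trans (hhmono hp1 ⟨hT.le, le_refl T⟩ hp1.2)⟩
  have hKcompact : IsCompact K :=
    (isCompact_Icc.prod isCompact_Icc).of_isClosed_subset hKclosed hKsub
  -- the weighted function
  set Ψ : ℝ × ℝ → ℝ := fun p => ψ p.1 p.2 * Real.exp (-k * p.1) with hΨdef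
  have hΨcont : ContinuousOn Ψ K :=
    hψcont.mul ((Real.continuous_exp.comp (continuous_const.mul continuous_fst)).continuousOn)
  have hKne : K.Nonempty := ⟨(t₁, x₁), ⟨ht₁, hx₁⟩⟩
  obtain ⟨p₀, hp₀K, hp₀min⟩ := hKcompact.exists_isMinOn hKne hΨcont
  obtain ⟨t₀, x₀⟩ := p₀
  obtain ⟨ht₀, hx₀⟩ := hp₀K
  simp only at ht₀ hx₀
  have hmin : ∀ p ∈ K, Ψ (t₀, x₀) ≤ Ψ p := fun p hp => hp₀min hp
  -- the minimum value is negative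
  have hmneg : Ψ (t₀, x₀) < 0 := by
    refine lt_of_le_of_lt (hmin (t₁, x₁) ⟨ht₁, hx₁⟩) ?_
    exact mul_neg_of_neg_of_pos hneg (Real.exp_pos _)
  simp only [hΨdef] at hmneg
  have hμneg : ψ t₀ x₀ < 0 := by
    nlinarith [Real.exp_pos (-k * t₀), hmneg]
  -- t₀ > 0
  have ht₀pos : 0 < t₀ := by
    rcases eq_or_lt_of_le ht₀.1 with heq | hlt
    · exfalso
      subst heq
      rw [hh0] at hx₀
      linarith [hinit x₀ hx₀]
    · exact hlt
  -- x₀ < h t₀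
  have hx₀lt : x₀ < h t₀ := by
    rcases lt_or_eq_of_le hx₀.2 with hlt | heq
    · exact hlt
    · exfalso
      have := hbd t₀ ⟨ht₀pos, ht₀.2⟩
      rw [← heq] at this
      linarith
  have ht₀Ioc : t₀ ∈ Ioc 0 T := ⟨ht₀pos, ht₀.2⟩
  have hx₀Ico : x₀ ∈ Ico 0 (h t₀) := ⟨hx₀.1, hx₀lt⟩
  have hht₀pos : 0 < h t₀ := lt_of_le_of_lt hx₀.1 hx₀lt
  -- on the time slice t₀, ψ t₀ x₀ is the minimum
  have hslice : ∀ y ∈ Icc 0 (h t₀), ψ t₀ x₀ ≤ ψ t₀ y := by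
    intro y hy
    have := hmin (t₀, y) ⟨ht₀, hy⟩
    simp only [hΨdef] at this
    exact le_of_mul_le_mul_right this (Real.exp_pos _)
  -- derivative of s ↦ ψ s x₀ * exp (-k s) at t₀
  have hexp : HasDerivAt (fun s : ℝ => Real.exp (-k * s)) (Real.exp (-k * t₀) * (-k)) t₀ := by
    simpa using (((hasDerivAt_id t₀).const_mul (-k)).exp)
  set g : ℝ → ℝ := fun s => ψ s x₀ * Real.exp (-k * s) with hgdef
  set D : ℝ := ψt t₀ x₀ * Real.exp (-k * t₀) + ψ t₀ x₀ * (Real.exp (-k * t₀) * (-k)) with hDdef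
  have hg : HasDerivAt g D t₀ := (hderiv t₀ ht₀ x₀ hx₀).mul hexp
  -- eventually in the left neighborhood, (s, x₀) ∈ K
  have hIoo : Ioo 0 t₀ ∈ 𝓝[<] t₀ := Ioo_mem_nhdsLT_of_mem ⟨ht₀pos, le_refl t₀⟩
  have hIccmem : Icc 0 T ∈ 𝓝[<] t₀ :=
    mem_of_superset hIoo (fun s hs => ⟨hs.1.le, hs.2.le.trans ht₀.2⟩)
  have hle : 𝓝[<] t₀ ≤ 𝓝[Icc 0 T] t₀ := nhdsWithin_le_iff.2 hIccmem
  have hhev : ∀ᶠ s in 𝓝[<] t₀, x₀ < h s := by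
    have htend : Tendsto h (𝓝[<] t₀) (𝓝 (h t₀)) := (hhc t₀ ht₀).mono_left hle
    exact htend.eventually (eventually_gt_nhds hx₀lt)
  have hevK : ∀ᶠ s in 𝓝[<] t₀, g t₀ ≤ g s := by
    filter_upwards [hhev, hIoo] with s hhs hs
    exact hmin (s, x₀) ⟨⟨hs.1.le, hs.2.le.trans ht₀.2⟩, hx₀.1, hhs.le⟩
  -- D ≤ 0 via slopes
  have hDle : D ≤ 0 := by
    have hslope : Tendsto (slope g t₀) (𝓝[Iio t₀ \ {t₀}] t₀) (𝓝 D) :=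
      hasDerivWithinAt_iff_tendsto_slope.1 (hg.hasDerivWithinAt (s := Iio t₀))
    have hfilter : Iio t₀ \ {t₀} = Iio t₀ := by
      ext s
      simp only [mem_diff, mem_Iio, mem_singleton_iff]
      exact ⟨fun hs => hs.1, fun hs => ⟨hs, ne_of_lt hs⟩⟩
    rw [hfilter] at hslope
    refine le_of_tendsto hslope ?_
    filter_upwards [hevK, eventually_mem_nhdsWithin] with s hgs hslt
    rw [slope_def_field]
    exact div_nonpos_of_nonneg_of_nonpos (by linarith) (by simp only [mem_Iio] at hslt; linarith)
  -- hence ψt t₀ x₀ ≤ k * ψ t₀ x₀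
  have hψtle : ψt t₀ x₀ ≤ k * ψ t₀ x₀ := by
    have he := Real.exp_pos (-k * t₀)
    have h2 : ψt t₀ x₀ * Real.exp (-k * t₀) ≤ (k * ψ t₀ x₀) * Real.exp (-k * t₀) := by
      rw [hDdef] at hDle
      nlinarith [hDle]
    exact le_of_mul_le_mul_right h2 he
  -- the nonlocal integral is bounded below by ψ t₀ x₀
  set I : ℝ := ∫ y in (0:ℝ)..(h t₀), J (x₀ - y) * ψ t₀ y with hIdef
  have hcontψ : ContinuousOn (fun y => ψ t₀ y) (Icc 0 (h t₀)) := by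
    have hc1 : ContinuousOn (fun y : ℝ => ((t₀, y) : ℝ × ℝ)) (Icc 0 (h t₀)) :=
      (continuous_const.prodMk continuous_id).continuousOn
    exact hψcont.comp hc1 (fun y hy => ⟨ht₀, hy⟩)
  have hint2 : IntervalIntegrable (fun y => J (x₀ - y) * ψ t₀ y) volume 0 (h t₀) := by
    apply ContinuousOn.intervalIntegrable
    rw [uIcc_of_le hht₀pos.le]
    exact ((hJc.comp (continuous_const.sub continuous_id)).continuousOn).mul hcontψ
  have hint1 : IntervalIntegrable (fun y => J (x₀ - y) * ψ t₀ x₀) volume 0 (h t₀) :=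
    (((hJc.comp (continuous_const.sub continuous_id)).mul continuous_const).intervalIntegrable _ _)
  have hmono : ∫ y in (0:ℝ)..(h t₀), J (x₀ - y) * ψ t₀ x₀ ≤ I :=
    intervalIntegral.integral_mono_on hht₀pos.le hint1 hint2
      (fun y hy => mul_le_mul_of_nonneg_left (hslice y hy) (hJnn _))
  have hJle : (∫ y in (0:ℝ)..(h t₀), J (x₀ - y)) ≤ 1 := by
    rw [intervalIntegral.integral_comp_sub_left J x₀]
    rw [intervalIntegral.integral_of_le (by linarith : x₀ - h t₀ ≤ x₀ - 0)]
    calc ∫ y in Set.Ioc (x₀ - h t₀) (x₀ - 0), J y ≤ ∫ y, J y :=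
          setIntegral_le_integral hJint (Eventually.of_forall hJnn)
      _ = 1 := hJ1
  have hJnn' : 0 ≤ ∫ y in (0:ℝ)..(h t₀), J (x₀ - y) :=
    intervalIntegral.integral_nonneg hht₀pos.le (fun y _ => hJnn _)
  have hconst : ∫ y in (0:ℝ)..(h t₀), J (x₀ - y) * ψ t₀ x₀
      = (∫ y in (0:ℝ)..(h t₀), J (x₀ - y)) * ψ t₀ x₀ :=
    intervalIntegral.integral_mul_const _ _
  have hIlb : ψ t₀ x₀ ≤ I := by
    rw [hconst] at hmono
    nlinarith [hJle, hJnn', hμneg, hmono]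
  -- combine everything
  have hineq' := hineq t₀ ht₀Ioc x₀ hx₀Ico
  have hcabs := abs_le.1 (hMbd t₀ ht₀Ioc x₀ hx₀Ico)
  have e1 : d * ψ t₀ x₀ ≤ d * I := mul_le_mul_of_nonneg_left hIlb hd.le
  have e2 : M * ψ t₀ x₀ ≤ c t₀ x₀ * ψ t₀ x₀ := by nlinarith [hcabs.2, hμneg]
  have e3 : k * ψ t₀ x₀ = d * ψ t₀ x₀ + M * ψ t₀ x₀ + ψ t₀ x₀ := by rw [hkdef]; ring
  linarith [hineq', hψtle, e1, e2, hμneg, e3]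
end

section
/- Let d, a₀ > 0 and J satisfy condition (J), and let j(x) = ∫_0^∞ J(x−y) dy. For l > 0 define λ_p(l) = inf { λ ∈ ℝ : there exists a continuous function φ > 0 on [0,l] with d ∫_0^l J(x−y) φ(y) dy − d j(x) φ(x) + a₀ φ(x) ≤ λ φ(x) for all x ∈ [0,l] }. Then λ_p(l) ≤ a₀ for all l > 0, and lim_{l→∞} λ_p(l) = a₀. -/
open MeasureTheory Filter Set intervalIntegral

/-- Change of variables for the tail integral. -/
lemma stmt5_tail_cov (J : ℝ → ℝ) (x a : ℝ) :
    ∫ y in Ioi a, J (x - y) = ∫ z in Iio (x - a), J z := by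
  have h1 : MeasurePreserving (fun t : ℝ => x - t) volume volume :=
    Measure.measurePreserving_sub_left volume x
  have hemb : MeasurableEmbedding (fun t : ℝ => x - t) := by
    have := (MeasurableEquiv.subLeft x).measurableEmbedding
    simpa [MeasurableEquiv.subLeft, Equiv.subLeft] using this
  rw [← image_const_sub_Ioi]
  exact (h1.setIntegral_image_emb hemb J _).symm

/-- Fubini swap for iterated interval integrals of a continuous function. -/
lemma stmt5_swap_iint (f : ℝ → ℝ → ℝ) (hf : Continuous (Function.uncurry f)) {l : ℝ}
    (hl : 0 ≤ l) :
    ∫ x in (0:ℝ)..l, ∫ y in (0:ℝ)..l, f x y = ∫ y in (0:ℝ)..l, ∫ x in (0:ℝ)..l, f x y := by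
  simp_rw [intervalIntegral.integral_of_le hl]
  apply integral_integral_swap
  rw [Measure.prod_restrict, ← Measure.volume_eq_prod]
  exact ((hf.continuousOn).integrableOn_compact (isCompact_Icc.prod isCompact_Icc)).mono_set
    (prod_mono Ioc_subset_Icc_self Ioc_subset_Icc_self)

lemma stmt5_amgm (a b c : ℝ) (ha : 0 < a) (hb : 0 < b) (hc : 0 ≤ c) :
    2 * c ≤ c * b / a + c * a / b := by
  have h : (2:ℝ) ≤ b / a + a / b := by
    rw [div_add_div _ _ ha.ne' hb.ne', le_div_iff₀ (mul_pos ha hb)]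
    nlinarith [sq_nonneg (a - b)]
  have := mul_le_mul_of_nonneg_left h hc
  calc 2 * c = c * 2 := by ring
    _ ≤ c * (b / a + a / b) := this
    _ = c * b / a + c * a / b := by ring

lemma stmt5_tail_small (J : ℝ → ℝ) (hJint : Integrable J) {ε : ℝ} (hε : 0 < ε) :
    ∃ L : ℝ, 0 ≤ L ∧ (∫ z in Iic (-L), J z) ≤ ε := by
  have h : Tendsto (fun n : ℕ => ∫ z in Iic (-(n:ℝ)), J z) atTop
      (nhds (∫ z in ⋂ n : ℕ, Iic (-(n:ℝ)), J z)) :=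
    tendsto_setIntegral_of_antitone (fun _ => measurableSet_Iic)
      (fun m n hmn => Iic_subset_Iic.2 (by exact_mod_cast neg_le_neg (Nat.cast_le.2 hmn)))
      ⟨0, hJint.integrableOn⟩
  have hcap : (⋂ n : ℕ, Iic (-(n:ℝ))) = ∅ := by
    ext x
    simp only [mem_iInter, mem_Iic, mem_empty_iff_false, iff_false, not_forall, not_le]
    obtain ⟨n, hn⟩ := exists_nat_gt (-x)
    exact ⟨n, by linarith⟩
  rw [hcap] at h
  simp only [Measure.restrict_empty, integral_zero_measure] at h
  obtain ⟨n, hn⟩ := (h.eventually (eventually_le_nhds hε)).exists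
  exact ⟨n, Nat.cast_nonneg n, hn⟩

/-- Key lower bound on any element of the eigenvalue set, via the Rayleigh-quotient
argument tested against `ψ ≡ 1`. -/
lemma stmt5_key_lower (d a₀ l L ε lam : ℝ) (hd : 0 < d) (hl : 0 < l) (hL0 : 0 ≤ L)
    (hLl : L ≤ l)
    (J j : ℝ → ℝ) (hJc : Continuous J) (hJnn : ∀ x, 0 ≤ J x) (hJeven : ∀ x, J (-x) = J x)
    (hJint : Integrable J) (hJ1 : ∫ x, J x = 1)
    (hjI : ∀ x, j x = ∫ z in Iic x, J z)
    (hε : (∫ z in Iic (-L), J z) ≤ ε)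
    (φ : ℝ → ℝ) (hφc : Continuous φ) (hφpos : ∀ x, 0 < φ x)
    (hφineq : ∀ x ∈ Icc 0 l,
      d * (∫ y in (0:ℝ)..l, J (x - y) * φ y) - d * j x * φ x + a₀ * φ x ≤ lam * φ x) :
    a₀ - d * ε - d * L / l ≤ lam := by
  -- the distribution function K
  set K : ℝ → ℝ := fun t => ∫ z in Iic t, J z with hK
  have hKmono : Monotone K := fun a b hab =>
    setIntegral_mono_set hJint.integrableOn (Eventually.of_forall hJnn)
      (HasSubset.Subset.eventuallyLE (Iic_subset_Iic.2 hab))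
  have hKone : ∀ t, K t ≤ 1 := fun t => by
    rw [hK, ← hJ1]; exact setIntegral_le_integral hJint (Eventually.of_forall hJnn)
  have hKnn : ∀ t, 0 ≤ K t := fun t =>
    setIntegral_nonneg measurableSet_Iic fun y _ => hJnn y
  have hε0 : 0 ≤ ε := (hKnn (-L)).trans hε
  have hjmono : Monotone j := by
    intro a b hab; rw [hjI, hjI]; exact hKmono hab
  -- the symmetrized kernel P
  set P : ℝ → ℝ → ℝ := fun x y => J (x - y) * φ y / φ x with hP
  have hPc : Continuous (Function.uncurry P) := by
    apply Continuous.div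
    · exact (hJc.comp (continuous_fst.sub continuous_snd)).mul (hφc.comp continuous_snd)
    · exact hφc.comp continuous_fst
    · exact fun p => (hφpos _).ne'
  have hPc' : Continuous (Function.uncurry fun x y => P y x) :=
    hPc.comp continuous_swap
  -- inner integral functions
  set g : ℝ → ℝ := fun x => ∫ y in (0:ℝ)..l, P x y with hg
  have hgc : Continuous g :=
    intervalIntegral.continuous_parametric_intervalIntegral_of_continuous' hPc 0 l
  set g' : ℝ → ℝ := fun x => ∫ y in (0:ℝ)..l, P y x with hg'
  have hg'c : Continuous g' :=
    intervalIntegral.continuous_parametric_intervalIntegral_of_continuous' hPc' 0 l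
  set Q : ℝ → ℝ := fun x => ∫ y in (0:ℝ)..l, J (x - y) with hQ
  have hQc : Continuous Q := by
    apply intervalIntegral.continuous_parametric_intervalIntegral_of_continuous' (μ := volume)
      (f := fun x y => J (x - y)) (hJc.comp (continuous_fst.sub continuous_snd)) 0 l
  -- Step C1: pointwise bound
  have C1 : ∀ x ∈ Icc (0:ℝ) l, d * g x ≤ (lam - a₀) + d * j x := by
    intro x hx
    have hI := hφineq x hx
    have h1 : d * (∫ y in (0:ℝ)..l, J (x - y) * φ y) ≤ (lam - a₀ + d * j x) * φ x := by
      nlinarith [hI]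
    have h2 : g x = (∫ y in (0:ℝ)..l, J (x - y) * φ y) / φ x := by
      rw [hg, hP]; exact intervalIntegral.integral_div _ _
    rw [h2, mul_div_assoc']
    exact (div_le_iff₀ (hφpos x)).2 (by linarith)
  -- Step C2: integrate
  have hjii : IntervalIntegrable j volume 0 l := hjmono.intervalIntegrable
  have C2 : d * ∫ x in (0:ℝ)..l, g x ≤ (lam - a₀) * l + d * ∫ x in (0:ℝ)..l, j x := by
    have hm := intervalIntegral.integral_mono_on (f := fun x => d * g x) (g := fun x => lam - a₀ + d * j x) hl.le
      ((continuous_const.mul hgc).intervalIntegrable 0 l)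
      (intervalIntegrable_const.add (hjii.const_mul d)) C1
    rw [intervalIntegral.integral_const_mul] at hm
    rw [intervalIntegral.integral_add intervalIntegrable_const (hjii.const_mul d),
      intervalIntegral.integral_const, intervalIntegral.integral_const_mul] at hm
    simpa [smul_eq_mul, mul_comm] using hm
  -- Step C3: Fubini/symmetry
  have hswap : ∫ x in (0:ℝ)..l, g' x = ∫ x in (0:ℝ)..l, g x := by
    rw [hg', hg]
    exact stmt5_swap_iint (fun x y => P y x) hPc' hl.le
  have C3 : ∫ x in (0:ℝ)..l, Q x ≤ ∫ x in (0:ℝ)..l, g x := by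
    have hinner : ∀ x ∈ Icc (0:ℝ) l, 2 * Q x ≤ g x + g' x := by
      intro x _
      have hptw : ∀ y ∈ Icc (0:ℝ) l, 2 * J (x - y) ≤ P x y + P y x := by
        intro y _
        have hJe : J (y - x) = J (x - y) := by rw [← neg_sub x y, hJeven]
        rw [hP]
        simp only
        rw [hJe]
        exact stmt5_amgm (φ x) (φ y) (J (x - y)) (hφpos x) (hφpos y) (hJnn _)
      have := intervalIntegral.integral_mono_on (μ := volume) (f := fun y => 2 * J (x - y)) (g := fun y => P x y + P y x) hl.le
        ((continuous_const.mul
          (hJc.comp (by continuity : Continuous fun y : ℝ => x - y))).intervalIntegrable 0 l)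
        (((hPc.comp (Continuous.prodMk_right x)).add
          (hPc'.comp (Continuous.prodMk_right x))).intervalIntegrable 0 l) hptw
      rw [intervalIntegral.integral_const_mul] at this
      rw [intervalIntegral.integral_add (f := fun y => P x y) (g := fun y => P y x)
        ((hPc.comp (Continuous.prodMk_right x)).intervalIntegrable 0 l)
        ((hPc'.comp (Continuous.prodMk_right x)).intervalIntegrable 0 l)] at this
      exact this
    have houter := intervalIntegral.integral_mono_on (μ := volume) (f := fun x => 2 * Q x) (g := fun x => g x + g' x) hl.le
      ((continuous_const.mul hQc).intervalIntegrable 0 l)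
      ((hgc.add hg'c).intervalIntegrable 0 l) hinner
    rw [intervalIntegral.integral_const_mul,
      intervalIntegral.integral_add (hgc.intervalIntegrable 0 l)
        (hg'c.intervalIntegrable 0 l), hswap] at houter
    linarith
  -- Step C4: compute Q
  have C4 : ∀ x, Q x = j x - K (x - l) := by
    intro x
    have h1 : Q x = ∫ z in (x - l)..x, J z := by
      rw [hQ]
      simpa using intervalIntegral.integral_comp_sub_left J x (a := 0) (b := l)
    rw [h1, ← intervalIntegral.integral_Iic_sub_Iic hJint.integrableOn hJint.integrableOn,
      hjI x]
  have hKlii : IntervalIntegrable (fun x => K (x - l)) volume 0 l :=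
    (hKmono.comp fun a b hab => by simpa using sub_le_sub_right hab l).intervalIntegrable
  have hQint : ∫ x in (0:ℝ)..l, Q x
      = (∫ x in (0:ℝ)..l, j x) - ∫ x in (0:ℝ)..l, K (x - l) := by
    rw [← intervalIntegral.integral_sub hjii hKlii]
    exact intervalIntegral.integral_congr fun x _ => C4 x
  -- Step C5: tail estimate
  have C5 : ∫ x in (0:ℝ)..l, K (x - l) ≤ ε * l + L := by
    have hii1 : IntervalIntegrable (fun x => K (x - l)) volume 0 (l - L) :=
      (hKmono.comp fun a b hab => by simpa using sub_le_sub_right hab l).intervalIntegrable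
    have hii2 : IntervalIntegrable (fun x => K (x - l)) volume (l - L) l :=
      (hKmono.comp fun a b hab => by simpa using sub_le_sub_right hab l).intervalIntegrable
    have hsplit : ∫ x in (0:ℝ)..l, K (x - l)
        = (∫ x in (0:ℝ)..(l - L), K (x - l)) + ∫ x in (l - L)..l, K (x - l) :=
      (intervalIntegral.integral_add_adjacent_intervals hii1 hii2).symm
    have hb1 : (∫ x in (0:ℝ)..(l - L), K (x - l)) ≤ ε * (l - L) := by
      have := intervalIntegral.integral_mono_on (by linarith : (0:ℝ) ≤ l - L) hii1
        intervalIntegrable_const (fun x hx => by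
          calc K (x - l) ≤ K (-L) := hKmono (by linarith [hx.2])
            _ ≤ ε := hε)
      simpa [smul_eq_mul, mul_comm] using this
    have hb2 : (∫ x in (l - L)..l, K (x - l)) ≤ L := by
      have := intervalIntegral.integral_mono_on (by linarith : l - L ≤ l) hii2
        intervalIntegrable_const (fun x _ => hKone (x - l))
      simpa [smul_eq_mul] using this
    calc ∫ x in (0:ℝ)..l, K (x - l) = _ + _ := hsplit
      _ ≤ ε * (l - L) + L := add_le_add hb1 hb2
      _ ≤ ε * l + L := by nlinarith
  -- Combine
  have hcomb : d * ((∫ x in (0:ℝ)..l, j x) - ∫ x in (0:ℝ)..l, K (x - l))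
      ≤ (lam - a₀) * l + d * ∫ x in (0:ℝ)..l, j x := by
    rw [← hQint]
    calc d * ∫ x in (0:ℝ)..l, Q x ≤ d * ∫ x in (0:ℝ)..l, g x :=
          mul_le_mul_of_nonneg_left C3 hd.le
      _ ≤ _ := C2
  have hfin : a₀ * l - d * (ε * l + L) ≤ lam * l := by
    have h1 : -(d * ∫ x in (0:ℝ)..l, K (x - l)) ≤ (lam - a₀) * l := by linarith
    have h2 : d * ∫ x in (0:ℝ)..l, K (x - l) ≤ d * (ε * l + L) :=
      mul_le_mul_of_nonneg_left C5 hd.le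
    nlinarith
  -- divide by l
  have hcl : (a₀ - d * ε - d * L / l) * l ≤ lam * l := by
    have hdl : d * L / l * l = d * L := by field_simp
    nlinarith [hfin]
  exact le_of_mul_le_mul_right hcl hl

/-- The generalized principal eigenvalue of the Neumann-type nonlocal operator
L^N_{(0,l)} + a₀ on [0,l], defined by the infimum characterization (2.x). -/
noncomputable def lamP (d a₀ : ℝ) (J j : ℝ → ℝ) (l : ℝ) : ℝ :=
  sInf {lam : ℝ | ∃ φ : ℝ → ℝ, ContinuousOn φ (Icc 0 l) ∧
    (∀ x ∈ Icc 0 l, 0 < φ x) ∧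
    ∀ x ∈ Icc 0 l,
      d * (∫ y in (0:ℝ)..l, J (x - y) * φ y) - d * j x * φ x + a₀ * φ x
        ≤ lam * φ x}

/-- Lemma 2.3(2): λ_p(L^N_{(0,l)} + a₀) ≤ a₀ for all l > 0, and
λ_p(L^N_{(0,l)} + a₀) → a₀ as l → ∞. -/
theorem stmt5 (d a₀ : ℝ) (hd : 0 < d) (ha₀ : 0 < a₀)
    (J : ℝ → ℝ)
    (hJc : Continuous J) (hJnn : ∀ x, 0 ≤ J x) (hJ0 : 0 < J 0)
    (hJeven : ∀ x, J (-x) = J x)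
    (hJint : Integrable J) (hJ1 : ∫ x, J x = 1)
    (j : ℝ → ℝ) (hj : ∀ x, j x = ∫ y in Ioi (0:ℝ), J (x - y)) :
    (∀ l > (0:ℝ), lamP d a₀ J j l ≤ a₀) ∧
    Tendsto (fun l => lamP d a₀ J j l) atTop (nhds a₀) := by
  have hjI : ∀ x, j x = ∫ z in Iic x, J z := by
    intro x
    rw [hj, stmt5_tail_cov, sub_zero, integral_Iic_eq_integral_Iio]
  -- membership of a₀ in the defining set, for every l > 0
  have hmem : ∀ l : ℝ, 0 < l → a₀ ∈ {lam : ℝ | ∃ φ : ℝ → ℝ, ContinuousOn φ (Icc 0 l) ∧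
      (∀ x ∈ Icc 0 l, 0 < φ x) ∧
      ∀ x ∈ Icc 0 l,
        d * (∫ y in (0:ℝ)..l, J (x - y) * φ y) - d * j x * φ x + a₀ * φ x
          ≤ lam * φ x} := by
    intro l hl
    refine ⟨fun _ => 1, continuousOn_const, fun x _ => one_pos, fun x hx => ?_⟩
    have h1 : (∫ y in (0:ℝ)..l, J (x - y) * 1) = ∫ z in (x - l)..x, J z := by
      simp only [mul_one]
      simpa using intervalIntegral.integral_comp_sub_left J x (a := 0) (b := l)
    have h2 : (∫ z in (x - l)..x, J z) ≤ j x := by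
      rw [intervalIntegral.integral_of_le (by linarith [hx.1, hx.2]), hjI]
      exact setIntegral_mono_set hJint.integrableOn (Eventually.of_forall hJnn)
        (HasSubset.Subset.eventuallyLE Ioc_subset_Iic_self)
    have h3 : d * (∫ y in (0:ℝ)..l, J (x - y) * 1) ≤ d * j x :=
      mul_le_mul_of_nonneg_left (h1 ▸ h2) hd.le
    simp only [mul_one] at h3 ⊢
    linarith
  -- general lower bound for elements of the defining set
  have hlow : ∀ l L ε lam : ℝ, 0 < l → 0 ≤ L → L ≤ l → (∫ z in Iic (-L), J z) ≤ ε →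
      lam ∈ {lam : ℝ | ∃ φ : ℝ → ℝ, ContinuousOn φ (Icc 0 l) ∧
        (∀ x ∈ Icc 0 l, 0 < φ x) ∧
        ∀ x ∈ Icc 0 l,
          d * (∫ y in (0:ℝ)..l, J (x - y) * φ y) - d * j x * φ x + a₀ * φ x
            ≤ lam * φ x} →
      a₀ - d * ε - d * L / l ≤ lam := by
    intro l L ε lam hl hL0 hLl hε hmem'
    obtain ⟨φ, hφc, hφpos, hφineq⟩ := hmem'
    -- normalize the witness to a globally continuous positive function
    obtain ⟨ψ, hψc, hψpos, hψineq⟩ :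
        ∃ ψ : ℝ → ℝ, Continuous ψ ∧ (∀ x, 0 < ψ x) ∧
          ∀ x ∈ Icc 0 l,
            d * (∫ y in (0:ℝ)..l, J (x - y) * ψ y) - d * j x * ψ x + a₀ * ψ x
              ≤ lam * ψ x := by
      refine ⟨fun x => φ (projIcc 0 l hl.le x), ?_, ?_, ?_⟩
      · exact hφc.comp_continuous (continuous_subtype_val.comp continuous_projIcc)
          fun x => (projIcc 0 l hl.le x).2
      · exact fun x => hφpos _ (projIcc 0 l hl.le x).2
      · intro x hx
        have hproj : ∀ y ∈ Icc (0:ℝ) l,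
            φ ((projIcc 0 l hl.le y : Icc (0:ℝ) l) : ℝ) = φ y := by
          intro y hy; rw [projIcc_of_mem hl.le hy]
        have hint : (∫ y in (0:ℝ)..l, J (x - y) * φ ((projIcc 0 l hl.le y : Icc (0:ℝ) l) : ℝ))
            = ∫ y in (0:ℝ)..l, J (x - y) * φ y := by
          apply intervalIntegral.integral_congr
          intro y hy
          rw [uIcc_of_le hl.le] at hy
          simp only [hproj y hy]
        simp only [hproj x hx, hint]
        exact hφineq x hx
    exact stmt5_key_lower d a₀ l L ε lam hd hl hL0 hLl J j hJc hJnn hJeven hJint hJ1 hjI hε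
      ψ hψc hψpos hψineq
  -- crude uniform lower bound (gives BddBelow)
  have hcrude : ∀ l : ℝ, 0 < l → BddBelow {lam : ℝ | ∃ φ : ℝ → ℝ, ContinuousOn φ (Icc 0 l) ∧
      (∀ x ∈ Icc 0 l, 0 < φ x) ∧
      ∀ x ∈ Icc 0 l,
        d * (∫ y in (0:ℝ)..l, J (x - y) * φ y) - d * j x * φ x + a₀ * φ x
          ≤ lam * φ x} := by
    intro l hl
    refine ⟨a₀ - d, fun lam hlam => ?_⟩
    have h01 : (∫ z in Iic (-(0:ℝ)), J z) ≤ 1 := by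
      rw [← hJ1]
      exact setIntegral_le_integral hJint (Eventually.of_forall hJnn)
    have := hlow l 0 1 lam hl le_rfl hl.le h01 hlam
    have h0l : d * 0 / l = 0 := by simp
    rw [h0l] at this
    linarith
  have hub : ∀ l > (0:ℝ), lamP d a₀ J j l ≤ a₀ := by
    intro l hl
    exact csInf_le (hcrude l hl) (hmem l hl)
  refine ⟨hub, ?_⟩
  rw [Metric.tendsto_atTop]
  intro ε hε
  obtain ⟨L, hL0, hLtail⟩ := stmt5_tail_small J hJint (by positivity : 0 < ε / (2 * d))
  refine ⟨max (max L 1) (2 * d * L / ε + 1), fun l hl => ?_⟩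
  have hlL : L ≤ l := le_trans (le_max_left L 1) (le_trans (le_max_left _ _) hl)
  have hl1 : (1:ℝ) ≤ l := le_trans (le_max_right L 1) (le_trans (le_max_left _ _) hl)
  have hl0 : 0 < l := lt_of_lt_of_le one_pos hl1
  have hl2 : 2 * d * L / ε + 1 ≤ l := le_trans (le_max_right _ _) hl
  -- lower bound on lamP
  have hge : a₀ - d * (ε / (2 * d)) - d * L / l ≤ lamP d a₀ J j l := by
    apply le_csInf ⟨a₀, hmem l hl0⟩
    intro b hb
    exact hlow l L (ε / (2 * d)) b hl0 hL0 hlL hLtail hb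
  have heq : d * (ε / (2 * d)) = ε / 2 := by field_simp
  rw [heq] at hge
  have hdLl : d * L / l < ε / 2 := by
    rw [div_lt_iff₀ hl0]
    have hkey : ε * (2 * d * L / ε + 1) = 2 * d * L + ε := by field_simp
    have h2 := mul_le_mul_of_nonneg_left hl2 hε.le
    rw [hkey] at h2
    linarith
  have hle := hub l hl0
  rw [Real.dist_eq, abs_sub_lt_iff]
  constructor <;> linarith
end

section
/- Let d, a₀ > 0 and J satisfy condition (J), let j(x) = ∫_0^∞ J(x−y) dy, and let λ_p(l) be the principal eigenvalue of the operator φ ↦ d ∫_0^l J(·−y) φ(y) dy − d j(·) φ + a₀ φ on C([0,l]), with positive eigenfunction φ₁. Then lim_{l→0^+} λ_p(l) = a₀ − d/2. -/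
open MeasureTheory Filter Set intervalIntegral

/-- Lemma 2.3(3): if for each l > 0 the number lam l is a
principal eigenvalue of φ ↦ d∫_0^l J(·−y)φ(y)dy − d j φ + a₀ φ with a positive
continuous eigenfunction, then lam l → a₀ − d/2 as l → 0⁺. -/
theorem stmt6 (d a₀ : ℝ) (hd : 0 < d) (ha₀ : 0 < a₀)
    (J : ℝ → ℝ)
    (hJc : Continuous J) (hJnn : ∀ x, 0 ≤ J x) (hJ0 : 0 < J 0)
    (hJeven : ∀ x, J (-x) = J x)
    (hJint : Integrable J) (hJ1 : ∫ x, J x = 1)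
    (hJbdd : ∃ M, ∀ x, J x ≤ M)
    (j : ℝ → ℝ) (hj : ∀ x, j x = ∫ y in Ioi (0:ℝ), J (x - y))
    (lam : ℝ → ℝ)
    (heig : ∀ l > (0:ℝ), ∃ φ : ℝ → ℝ, ContinuousOn φ (Icc 0 l) ∧
      (∀ x ∈ Icc 0 l, 0 < φ x) ∧
      ∀ x ∈ Icc 0 l,
        d * (∫ y in (0:ℝ)..l, J (x - y) * φ y) - d * j x * φ x + a₀ * φ x
          = lam l * φ x) :
    Tendsto lam (nhdsWithin 0 (Ioi 0)) (nhds (a₀ - d / 2)) := by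
  obtain ⟨M, hM⟩ := hJbdd
  have hMpos : 0 < M := lt_of_lt_of_le hJ0 (hM 0)
  -- j x = ∫ t in Iic x, J t
  have hjIic : ∀ x : ℝ, j x = ∫ t in Iic x, J t := by
    intro x
    have hemb : MeasurableEmbedding (fun t : ℝ => x - t) :=
      (MeasurableEquiv.subLeft x).measurableEmbedding
    have hmp : MeasurePreserving (fun t : ℝ => x - t) volume volume :=
      Measure.measurePreserving_sub_left volume x
    have hpre : (fun t : ℝ => x - t) ⁻¹' (Iio x) = Ioi 0 := by
      ext t; simp [sub_lt_iff_lt_add]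
    have := hmp.setIntegral_preimage_emb hemb J (Iio x)
    rw [hpre] at this
    rw [hj x, this]
    exact setIntegral_congr_set Iio_ae_eq_Iic
  -- j 0 = 1/2
  have hIic0 : ∫ t in Iic (0:ℝ), J t = 1 / 2 := by
    have hneg : ∫ t in Ioi (0:ℝ), J (-t) = ∫ t in Iic (-(0:ℝ)), J t :=
      integral_comp_neg_Ioi 0 J
    rw [neg_zero] at hneg
    have heq : ∫ t in Ioi (0:ℝ), J t = ∫ t in Iic (0:ℝ), J t := by
      rw [← hneg]; simp_rw [hJeven]
    have hsum : (∫ t in Iic (0:ℝ), J t) + ∫ t in Ioi (0:ℝ), J t = 1 := by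
      rw [integral_Iic_add_Ioi hJint.integrableOn hJint.integrableOn, hJ1]
    linarith
  -- bound on j on [0, l]
  have hjbound : ∀ l > (0:ℝ), ∀ x ∈ Icc (0:ℝ) l, 1/2 ≤ j x ∧ j x ≤ 1/2 + M * l := by
    intro l hl x hx
    have hdiff : j x - 1/2 = ∫ t in (0:ℝ)..x, J t := by
      rw [hjIic x, ← hIic0,
        integral_Iic_sub_Iic hJint.integrableOn hJint.integrableOn]
    have hnn : 0 ≤ ∫ t in (0:ℝ)..x, J t :=
      intervalIntegral.integral_nonneg hx.1 (fun u _ => hJnn u)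
    have hle : ∫ t in (0:ℝ)..x, J t ≤ ∫ t in (0:ℝ)..x, M := by
      apply intervalIntegral.integral_mono_on hx.1 hJint.intervalIntegrable
        intervalIntegrable_const (fun u _ => hM u)
    rw [intervalIntegral.integral_const, smul_eq_mul] at hle
    have hxl : x ≤ l := hx.2
    constructor
    · linarith
    · nlinarith
  -- main bound on lam
  have hlam : ∀ l > (0:ℝ), a₀ - d/2 - d*M*l ≤ lam l ∧ lam l ≤ a₀ - d/2 + d*M*l := by
    intro l hl
    obtain ⟨φ, hφc, hφpos, hφeq⟩ := heig l hl
    obtain ⟨x₀, hx₀, hmaxOn⟩ := (isCompact_Icc (a := (0:ℝ)) (b := l)).exists_isMaxOn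
      (nonempty_Icc.mpr hl.le) hφc
    have hmax : ∀ u ∈ Icc (0:ℝ) l, φ u ≤ φ x₀ := fun u hu => hmaxOn hu
    set P := φ x₀ with hP
    have hPpos : 0 < P := hφpos x₀ hx₀
    set I := ∫ y in (0:ℝ)..l, J (x₀ - y) * φ y with hI
    have hcont : ContinuousOn (fun y => J (x₀ - y) * φ y) (Icc 0 l) :=
      ((hJc.comp (continuous_const.sub continuous_id)).continuousOn).mul hφc
    have hInt : IntervalIntegrable (fun y => J (x₀ - y) * φ y) volume 0 l := by
      apply hcont.intervalIntegrable_of_Icc hl.le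
    have hInn : 0 ≤ I :=
      intervalIntegral.integral_nonneg hl.le
        (fun u hu => mul_nonneg (hJnn _) (hφpos u hu).le)
    have hIle : I ≤ M * P * l := by
      have h1 : I ≤ ∫ _ in (0:ℝ)..l, M * P := by
        apply intervalIntegral.integral_mono_on hl.le hInt intervalIntegrable_const
        intro u hu
        exact mul_le_mul (hM _) (hmax u hu) (hφpos u hu).le hMpos.le
      rw [intervalIntegral.integral_const, smul_eq_mul] at h1
      nlinarith
    have heq := hφeq x₀ hx₀
    obtain ⟨hj1, hj2⟩ := hjbound l hl x₀ hx₀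
    rw [← hI, ← hP] at heq
    constructor
    · nlinarith [mul_pos hd hPpos, mul_nonneg (mul_nonneg hd.le hMpos.le) hl.le]
    · nlinarith [mul_pos hd hPpos, mul_nonneg (mul_nonneg hd.le hMpos.le) hl.le]
  -- squeeze
  have hbase : Tendsto (fun l : ℝ => d*M*l) (nhds 0) (nhds 0) := by
    simpa using (tendsto_id (x := nhds (0:ℝ))).const_mul (d*M)
  have hlo : Tendsto (fun l => a₀ - d/2 - d*M*l) (nhdsWithin 0 (Ioi 0)) (nhds (a₀ - d/2)) := by
    have := (tendsto_const_nhds (x := a₀ - d/2) (f := nhds (0:ℝ))).sub hbase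
    simpa using this.mono_left nhdsWithin_le_nhds
  have hhi : Tendsto (fun l => a₀ - d/2 + d*M*l) (nhdsWithin 0 (Ioi 0)) (nhds (a₀ - d/2)) := by
    have := (tendsto_const_nhds (x := a₀ - d/2) (f := nhds (0:ℝ))).add hbase
    simpa using this.mono_left nhdsWithin_le_nhds
  refine tendsto_of_tendsto_of_tendsto_of_le_of_le' hlo hhi ?_ ?_
  · filter_upwards [self_mem_nhdsWithin] with l hl
    exact (hlam l hl).1
  · filter_upwards [self_mem_nhdsWithin] with l hl
    exact (hlam l hl).2
end

section
/- Let d > 0, J satisfy condition (J), and f satisfy (F1)–(F3) with unique positive zero u*. If U : [0,∞) → ℝ is a bounded positive solution of d ∫_0^∞ J(x−y) U(y) dy − d U(x) + f(U(x)) = 0 on [0,∞), then U(x) ≤ u* for all x ≥ 0; that is, sup_{x≥0} U(x) ≤ u*. -/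
open MeasureTheory Filter Set

/-- part of Lemma 2.4, Step 4: any bounded positive solution U of
d∫_0^∞ J(x−y)U(y)dy − dU + f(U) = 0 on [0,∞) satisfies U ≤ u*, where u* is the
unique positive zero of f. -/
theorem stmt8 (d : ℝ) (hd : 0 < d)
    (J : ℝ → ℝ)
    (hJc : Continuous J) (hJnn : ∀ x, 0 ≤ J x) (hJ0 : 0 < J 0)
    (hJeven : ∀ x, J (-x) = J x)
    (hJint : Integrable J) (hJ1 : ∫ x, J x = 1)
    (f : ℝ → ℝ) (hf : ContDiff ℝ 1 f) (hf0 : f 0 = 0)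
    (hf'0 : 0 < deriv f 0)
    (hdec : StrictAntiOn (fun u => f u / u) (Ioi 0))
    (K : ℝ) (hK : 0 < K) (hneg : ∀ u > K, f u < 0)
    (ustar : ℝ) (hustar : 0 < ustar ∧ f ustar = 0)
    (U : ℝ → ℝ) (hUpos : ∀ x ≥ (0:ℝ), 0 < U x)
    (hUbdd : ∃ M, ∀ x ≥ (0:ℝ), U x ≤ M)
    (hUeq : ∀ x ≥ (0:ℝ),
      d * (∫ y in Ioi (0:ℝ), J (x - y) * U y) - d * U x + f (U x) = 0) :
    ∀ x ≥ (0:ℝ), U x ≤ ustar := by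
  obtain ⟨hupos, hfu⟩ := hustar
  obtain ⟨M, hM⟩ := hUbdd
  set S : Set ℝ := U '' Ici 0 with hS
  have hSne : S.Nonempty := ⟨U 0, 0, self_mem_Ici, rfl⟩
  have hSbdd : BddAbove S := ⟨M, by rintro _ ⟨x, hx, rfl⟩; exact hM x hx⟩
  set V := sSup S with hV
  have hle : ∀ x ≥ (0:ℝ), U x ≤ V := fun x hx => le_csSup hSbdd ⟨x, hx, rfl⟩
  have hVpos : 0 < V := lt_of_lt_of_le (hUpos 0 le_rfl) (hle 0 le_rfl)
  -- pointwise bound on the integral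
  have hint : ∀ x, (∫ y in Ioi (0:ℝ), J (x - y) * U y) ≤ V := by
    intro x
    by_cases h : Integrable (fun y => J (x - y) * U y) (volume.restrict (Ioi 0))
    · have hJint' : Integrable (fun y => J (x - y)) := hJint.comp_sub_left x
      have h2 : Integrable (fun y => J (x - y) * V) (volume.restrict (Ioi 0)) :=
        hJint'.restrict.mul_const V
      calc (∫ y in Ioi (0:ℝ), J (x - y) * U y)
          ≤ ∫ y in Ioi (0:ℝ), J (x - y) * V := by
            apply setIntegral_mono_on h h2 measurableSet_Ioi
            intro y hy
            exact mul_le_mul_of_nonneg_left (hle y (le_of_lt hy)) (hJnn _)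
        _ = (∫ y in Ioi (0:ℝ), J (x - y)) * V := integral_mul_const V _
        _ ≤ (∫ y, J (x - y)) * V := by
            apply mul_le_mul_of_nonneg_right _ (le_of_lt hVpos)
            exact setIntegral_le_integral hJint'
              (Filter.Eventually.of_forall fun y => hJnn _)
        _ = V := by
            rw [integral_sub_left_eq_self (fun y => J y) volume x, hJ1, one_mul]
    · rw [integral_undef h]
      exact le_of_lt hVpos
  -- key inequality
  have key : ∀ x ≥ (0:ℝ), 0 ≤ f (U x) - d * (U x - V) := by
    intro x hx
    have h1 := hUeq x hx
    have h2 := hint x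
    nlinarith [hint x, hUeq x hx]
  -- it suffices that V ≤ ustar
  suffices hVs : V ≤ ustar by
    intro x hx; exact le_trans (hle x hx) hVs
  by_contra hlt
  push_neg at hlt
  have hdiv := hdec (mem_Ioi.mpr hupos) (mem_Ioi.mpr hVpos) hlt
  have hdiv' : f V / V < f ustar / ustar := hdiv
  rw [hfu, zero_div] at hdiv'
  replace hdiv := hdiv'
  have hfV : f V < 0 := by
    rcases div_neg_iff.mp hdiv with ⟨h1, h2⟩ | ⟨h1, h2⟩
    · linarith
    · exact h1
  -- continuity of g at V
  have hgc : ContinuousAt (fun u => f u - d * (u - V)) V :=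
    (hf.continuous.continuousAt).sub (by fun_prop)
  have hgV : (fun u => f u - d * (u - V)) V < 0 := by simpa using hfV
  have hev : ∀ᶠ u in nhds V, (fun u => f u - d * (u - V)) u < 0 := by
    have := hgc.eventually_lt (continuousAt_const : ContinuousAt (fun _ => (0:ℝ)) V) hgV
    simpa using this
  rw [Metric.eventually_nhds_iff] at hev
  obtain ⟨δ, hδ, hδ'⟩ := hev
  obtain ⟨a, ⟨x, hx, rfl⟩, ha⟩ := exists_lt_of_lt_csSup hSne (sub_lt_self V hδ)
  have hdist : dist (U x) V < δ := by
    rw [Real.dist_eq, abs_lt]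
    constructor <;> [linarith; linarith [hle x hx]]
  have h1 : f (U x) - d * (U x - V) < 0 := hδ' hdist
  linarith [key x hx]
end

section
/- Let J satisfy condition (J), λ > 0, and k : [0,∞) → ℝ satisfy condition (K): k continuous and bounded, inf k > 0, and k_∞ := lim_{x→∞} k(x) exists and is finite. If U : [0,∞) → ℝ is a continuous positive bounded solution of d ∫_0^∞ J(x−y) U(y) dy − d U(x) + U(x)(k(x) − λ U(x)) = 0 with inf_{x≥0} U(x) > 0, then liminf_{x→∞} U(x) ≥ k_∞/λ. -/
open MeasureTheory Filter Set Topology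

/-- part of Lemma 2.7(1): for the logistic-type steady state
problem on the half line with coefficient k satisfying (K), any continuous
bounded positive solution U with inf U > 0 satisfies liminf_{x→∞} U ≥ k_∞/λ. -/
theorem stmt10 (d lam : ℝ) (hd : 0 < d) (hlam : 0 < lam)
    (J : ℝ → ℝ)
    (hJc : Continuous J) (hJnn : ∀ x, 0 ≤ J x) (hJ0 : 0 < J 0)
    (hJeven : ∀ x, J (-x) = J x)
    (hJint : Integrable J) (hJ1 : ∫ x, J x = 1)
    (k : ℝ → ℝ) (hkc : ContinuousOn k (Ici 0))
    (hkbdd : ∃ M, ∀ x ≥ (0:ℝ), k x ≤ M)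
    (hkinf : ∃ m > (0:ℝ), ∀ x ≥ (0:ℝ), m ≤ k x)
    (kinf : ℝ) (hklim : Tendsto k atTop (nhds kinf))
    (U : ℝ → ℝ) (hUc : ContinuousOn U (Ici 0))
    (hUbdd : ∃ M, ∀ x ≥ (0:ℝ), U x ≤ M)
    (hUinf : ∃ m > (0:ℝ), ∀ x ≥ (0:ℝ), m ≤ U x)
    (hUeq : ∀ x ≥ (0:ℝ),
      d * (∫ y in Ioi (0:ℝ), J (x - y) * U y) - d * U x
        + U x * (k x - lam * U x) = 0) :
    kinf / lam ≤ Filter.liminf U atTop := by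
  obtain ⟨M, hM⟩ := hUbdd
  obtain ⟨m, hm, hmU⟩ := hUinf
  set L := Filter.liminf U atTop with hLdef
  have hBge : IsBoundedUnder (· ≥ ·) atTop U :=
    ⟨m, eventually_map.2 (eventually_atTop.2 ⟨0, fun x hx => hmU x hx⟩)⟩
  have hBle : IsBoundedUnder (· ≤ ·) atTop U :=
    ⟨M, eventually_map.2 (eventually_atTop.2 ⟨0, fun x hx => hM x hx⟩)⟩
  have hCob : IsCoboundedUnder (· ≥ ·) atTop U := hBle.isCoboundedUnder_ge
  have hmL : m ≤ L :=
    le_liminf_of_le hCob (eventually_atTop.2 ⟨0, fun x hx => hmU x hx⟩)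
  have hL0 : 0 < L := lt_of_lt_of_le hm hmL
  -- key inequality for small ε
  have key : ∀ ε : ℝ, 0 < ε → ε < 1 → ε < m →
      d * (L - ε) * (1 - ε) ≤ (L + ε) * (d - kinf + ε + lam * (L + ε)) := by
    intro ε hε0 hε1 hεm
    -- choose A
    have hJA : Tendsto (fun A : ℝ => ∫ z in (-A)..A, J z) atTop (𝓝 1) := by
      have := intervalIntegral_tendsto_integral hJint tendsto_neg_atTop_atBot tendsto_id
      rwa [hJ1] at this
    have hAev : ∀ᶠ A in atTop, 1 - ε < ∫ z in (-A)..A, J z :=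
      hJA.eventually_const_lt (by linarith)
    obtain ⟨A, hA0, hAJ⟩ : ∃ A : ℝ, 0 ≤ A ∧ 1 - ε < ∫ z in (-A)..A, J z := by
      obtain ⟨A, hA⟩ := (hAev.and (eventually_ge_atTop (0:ℝ))).exists
      exact ⟨A, hA.2, hA.1⟩
    -- eventual lower bound for U
    have hev1 : ∀ᶠ x in atTop, L - ε < U x :=
      eventually_lt_of_lt_liminf (by linarith) hBge
    obtain ⟨R, hR⟩ := eventually_atTop.1 hev1
    -- eventual lower bound for k
    have hk1 : ∀ᶠ x in atTop, kinf - ε < k x :=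
      hklim.eventually_const_lt (by linarith)
    -- frequently U x < L + ε
    have hfreq : ∃ᶠ x in atTop, U x < L + ε :=
      frequently_lt_of_liminf_lt hCob (by linarith)
    obtain ⟨x, hxU, hxk, hxge⟩ :=
      (hfreq.and_eventually (hk1.and (eventually_ge_atTop (A + max R 0)))).exists
    have hxA : max R 0 ≤ x - A := by linarith
    have hx0 : (0:ℝ) ≤ x := le_trans (le_trans (le_max_right R 0) hxA) (by linarith)
    have hUnn : ∀ y, 0 < y → 0 ≤ U y := fun y hy => le_trans hm.le (hmU y hy.le)
    -- integrability
    have hJx : Integrable (fun y => J (x - y)) := (integrable_comp_sub_left J x).2 hJint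
    have hgInt : IntegrableOn (fun y => J (x - y) * U y) (Ioi (0:ℝ)) := by
      apply Integrable.mono' ((hJx.const_mul M).restrict)
      · exact (((hJc.comp (continuous_const.sub continuous_id)).continuousOn.mul
          (hUc.mono Ioi_subset_Ici_self)).aestronglyMeasurable measurableSet_Ioi)
      · refine (ae_restrict_iff' measurableSet_Ioi).2 (ae_of_all _ fun y hy => ?_)
        have h1 : 0 ≤ J (x - y) * U y := mul_nonneg (hJnn _) (hUnn y hy)
        rw [Real.norm_eq_abs, abs_of_nonneg h1]
        calc J (x - y) * U y ≤ J (x - y) * M :=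
              mul_le_mul_of_nonneg_left (hM y hy.le) (hJnn _)
          _ = M * J (x - y) := by ring
    have hsub : Ioc (x - A) (x + A) ⊆ Ioi (0:ℝ) := fun y hy =>
      lt_of_le_of_lt (le_trans (le_max_right R 0) hxA) hy.1
    -- step 1
    have step1 : (∫ y in Ioc (x - A) (x + A), J (x - y) * U y)
        ≤ ∫ y in Ioi (0:ℝ), J (x - y) * U y := by
      apply setIntegral_mono_set hgInt
      · exact (ae_restrict_iff' measurableSet_Ioi).2
          (ae_of_all _ fun y hy => mul_nonneg (hJnn _) (hUnn y hy))
      · exact HasSubset.Subset.eventuallyLE hsub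
    -- step 2
    have step2 : (∫ y in Ioc (x - A) (x + A), (L - ε) * J (x - y))
        ≤ ∫ y in Ioc (x - A) (x + A), J (x - y) * U y := by
      apply setIntegral_mono_on ((hJx.const_mul (L - ε)).integrableOn)
        (hgInt.mono_set hsub) measurableSet_Ioc
      intro y hy
      have hUy : L - ε ≤ U y := by
        have : R ≤ y := le_trans (le_trans (le_max_left R 0) hxA) hy.1.le
        exact (hR y this).le
      calc (L - ε) * J (x - y) ≤ U y * J (x - y) :=
            mul_le_mul_of_nonneg_right hUy (hJnn _)
        _ = J (x - y) * U y := by ring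
    -- step 3
    have step3 : (∫ y in Ioc (x - A) (x + A), (L - ε) * J (x - y))
        = (L - ε) * ∫ z in (-A)..A, J z := by
      rw [MeasureTheory.integral_const_mul]
      congr 1
      rw [← intervalIntegral.integral_of_le (by linarith : x - A ≤ x + A)]
      rw [intervalIntegral.integral_comp_sub_left J x]
      norm_num
    have step4 : (L - ε) * (1 - ε) ≤ (L - ε) * ∫ z in (-A)..A, J z :=
      mul_le_mul_of_nonneg_left hAJ.le (by linarith)
    have hI : (L - ε) * (1 - ε) ≤ ∫ y in Ioi (0:ℝ), J (x - y) * U y := by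
      calc (L - ε) * (1 - ε) ≤ (L - ε) * ∫ z in (-A)..A, J z := step4
        _ = ∫ y in Ioc (x - A) (x + A), (L - ε) * J (x - y) := step3.symm
        _ ≤ ∫ y in Ioc (x - A) (x + A), J (x - y) * U y := step2
        _ ≤ _ := step1
    -- use the equation
    have heq := hUeq x hx0
    set I := ∫ y in Ioi (0:ℝ), J (x - y) * U y with hIdef
    have hdI : d * I = U x * (d - k x + lam * U x) := by nlinarith [heq]
    have hlhs : d * (L - ε) * (1 - ε) ≤ U x * (d - k x + lam * U x) := by
      rw [← hdI]
      calc d * (L - ε) * (1 - ε) = d * ((L - ε) * (1 - ε)) := by ring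
        _ ≤ d * I := by exact mul_le_mul_of_nonneg_left hI hd.le
    have hUx0 : 0 ≤ U x := le_trans hm.le (hmU x hx0)
    have hFpos : 0 < d - k x + lam * U x := by
      by_contra hcon
      push_neg at hcon
      have h1 : U x * (d - k x + lam * U x) ≤ 0 :=
        mul_nonpos_of_nonneg_of_nonpos hUx0 hcon
      have h2 : 0 < d * (L - ε) * (1 - ε) := by
        apply mul_pos (mul_pos hd (by linarith)) (by linarith)
      linarith
    have h5 : U x * (d - k x + lam * U x) ≤ (L + ε) * (d - k x + lam * U x) :=
      mul_le_mul_of_nonneg_right hxU.le hFpos.le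
    have h6 : d - k x + lam * U x ≤ d - kinf + ε + lam * (L + ε) := by
      have := mul_le_mul_of_nonneg_left hxU.le hlam.le
      linarith [hxk]
    have h7 : (L + ε) * (d - k x + lam * U x) ≤ (L + ε) * (d - kinf + ε + lam * (L + ε)) :=
      mul_le_mul_of_nonneg_left h6 (by linarith)
    linarith
  -- take ε → 0⁺
  have hc1 : Tendsto (fun ε : ℝ => d * (L - ε) * (1 - ε)) (nhdsWithin 0 (Ioi 0))
      (𝓝 (d * L)) := by
    have : Continuous (fun ε : ℝ => d * (L - ε) * (1 - ε)) := by fun_prop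
    have h := (this.tendsto 0).mono_left (nhdsWithin_le_nhds : nhdsWithin (0:ℝ) (Ioi 0) ≤ 𝓝 0)
    simpa using h
  have hc2 : Tendsto (fun ε : ℝ => (L + ε) * (d - kinf + ε + lam * (L + ε)))
      (nhdsWithin 0 (Ioi 0)) (𝓝 (L * (d - kinf + lam * L))) := by
    have : Continuous (fun ε : ℝ => (L + ε) * (d - kinf + ε + lam * (L + ε))) := by fun_prop
    have h := (this.tendsto 0).mono_left (nhdsWithin_le_nhds : nhdsWithin (0:ℝ) (Ioi 0) ≤ 𝓝 0)
    simpa using h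
  have hev : ∀ᶠ ε in nhdsWithin (0:ℝ) (Ioi 0),
      d * (L - ε) * (1 - ε) ≤ (L + ε) * (d - kinf + ε + lam * (L + ε)) := by
    have hsmall : ∀ᶠ ε in nhdsWithin (0:ℝ) (Ioi 0), ε < min 1 m :=
      (tendsto_id.mono_left nhdsWithin_le_nhds).eventually_lt_const
        (lt_min one_pos hm)
    filter_upwards [hsmall, self_mem_nhdsWithin] with ε h1 h2
    exact key ε h2 (lt_of_lt_of_le h1 (min_le_left _ _)) (lt_of_lt_of_le h1 (min_le_right _ _))
  have hfinal : d * L ≤ L * (d - kinf + lam * L) := le_of_tendsto_of_tendsto hc1 hc2 hev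
  rw [div_le_iff₀ hlam]
  nlinarith [hfinal, hL0]
end

section
/- Let J satisfy condition (J), λ > 0, and k satisfy condition (K) with limit k_∞. If U : [0,∞) → ℝ is a continuous positive bounded solution of d ∫_0^∞ J(x−y) U(y) dy − d U(x) + U(x)(k(x) − λ U(x)) = 0, then limsup_{x→∞} U(x) ≤ k_∞/λ. -/
open MeasureTheory Filter Set
open scoped Topology

/-- part of Lemma 2.7(1): for the logistic-type steady state
problem on the half line with coefficient k satisfying (K), any continuous
bounded positive solution U satisfies limsup_{x→∞} U ≤ k_∞/λ (STATEMENT 11, Lemma 2.7(1)). -/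
theorem stmt11 (d lam : ℝ) (hd : 0 < d) (hlam : 0 < lam)
    (J : ℝ → ℝ)
    (hJc : Continuous J) (hJnn : ∀ x, 0 ≤ J x) (hJ0 : 0 < J 0)
    (hJeven : ∀ x, J (-x) = J x)
    (hJint : Integrable J) (hJ1 : ∫ x, J x = 1)
    (k : ℝ → ℝ) (hkc : ContinuousOn k (Ici 0))
    (hkbdd : ∃ M, ∀ x ≥ (0:ℝ), k x ≤ M)
    (hkinf : ∃ m > (0:ℝ), ∀ x ≥ (0:ℝ), m ≤ k x)
    (kinf : ℝ) (hklim : Tendsto k atTop (nhds kinf))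
    (U : ℝ → ℝ) (hUc : ContinuousOn U (Ici 0))
    (hUbdd : ∃ M, ∀ x ≥ (0:ℝ), U x ≤ M)
    (hUpos : ∀ x ≥ (0:ℝ), 0 < U x)
    (hUeq : ∀ x ≥ (0:ℝ),
      d * (∫ y in Ioi (0:ℝ), J (x - y) * U y) - d * U x
        + U x * (k x - lam * U x) = 0) :
    Filter.limsup U atTop ≤ kinf / lam := by
  obtain ⟨M0, hM0⟩ := hUbdd
  set M : ℝ := max M0 1 with hMdef
  have hMpos : (0:ℝ) < M := lt_of_lt_of_le one_pos (le_max_right _ _)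
  have hMU : ∀ x ≥ (0:ℝ), U x ≤ M := fun x hx => (hM0 x hx).trans (le_max_left _ _)
  obtain ⟨m, hm, hmk⟩ := hkinf
  have hkinfpos : 0 < kinf :=
    lt_of_lt_of_le hm (ge_of_tendsto hklim ((eventually_ge_atTop 0).mono fun x hx => hmk x hx))
  set L := limsup U atTop with hLdef
  have hbddU : IsBoundedUnder (· ≤ ·) atTop U :=
    ⟨M, (eventually_ge_atTop 0).mono fun x hx => hMU x hx⟩
  have hcobU : IsCoboundedUnder (· ≤ ·) atTop U :=
    isCoboundedUnder_le_of_eventually_le atTop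
      ((eventually_ge_atTop 0).mono fun x hx => (hUpos x hx).le)
  have hL0 : 0 ≤ L :=
    le_limsup_of_frequently_le
      (((eventually_ge_atTop 0).mono fun x hx => (hUpos x hx).le).frequently) hbddU
  rcases eq_or_lt_of_le hL0 with hLz | hLpos
  · rw [← hLz]
    positivity
  -- basic facts about J translated
  have hJx : ∀ x : ℝ, Integrable (fun y => J (x - y)) := fun x => hJint.comp_sub_left x
  have hJx1 : ∀ x : ℝ, (∫ y, J (x - y)) = 1 := by
    intro x
    rw [integral_sub_left_eq_self J volume x, hJ1]
  -- tail of J tends to 0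
  have htail : Tendsto (fun R => ∫ z in Ioi R, J z) atTop (𝓝 0) := by
    have h1 : Tendsto (fun R => ∫ z in (0:ℝ)..R, J z) atTop (𝓝 (∫ z in Ioi (0:ℝ), J z)) :=
      intervalIntegral_tendsto_integral_Ioi 0 hJint.integrableOn tendsto_id
    have h2 : ∀ᶠ R in atTop,
        (∫ z in Ioi (0:ℝ), J z) - (∫ z in (0:ℝ)..R, J z) = ∫ z in Ioi R, J z := by
      filter_upwards [eventually_ge_atTop (0:ℝ)] with R hR
      rw [intervalIntegral.integral_of_le hR]
      have hsplit :
          (∫ z in Ioc (0:ℝ) R ∪ Ioi R, J z) = (∫ z in Ioc (0:ℝ) R, J z) + ∫ z in Ioi R, J z :=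
        setIntegral_union (Ioc_disjoint_Ioi le_rfl) measurableSet_Ioi
          hJint.integrableOn hJint.integrableOn
      rw [Ioc_union_Ioi_eq_Ioi hR] at hsplit
      linarith
    have h3 : Tendsto (fun R => (∫ z in Ioi (0:ℝ), J z) - (∫ z in (0:ℝ)..R, J z)) atTop
        (𝓝 ((∫ z in Ioi (0:ℝ), J z) - (∫ z in Ioi (0:ℝ), J z))) :=
      tendsto_const_nhds.sub h1
    rw [sub_self] at h3
    exact h3.congr' h2
  -- Claim A: eventual upper bound for the convolution integral
  have claimA : ∀ ε > (0:ℝ), ∀ᶠ x in atTop, (∫ y in Ioi (0:ℝ), J (x - y) * U y) ≤ L + ε := by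
    intro ε hε
    obtain ⟨R, hRtail, hR0⟩ :=
      ((htail.eventually_lt_const (show (0:ℝ) < ε / (2 * M) by positivity)).and
        (eventually_ge_atTop (0:ℝ))).exists
    have hUev : ∀ᶠ x in atTop, U x < L + ε / 2 :=
      eventually_lt_of_limsup_lt (by linarith) hbddU
    obtain ⟨X, hX⟩ := eventually_atTop.1 hUev
    rw [eventually_atTop]
    refine ⟨max X 0 + R + 1, fun x hx => ?_⟩
    have hxX : X ≤ x - R := by
      have := le_max_left X 0
      linarith
    have hx0 : (0:ℝ) ≤ x - R := by
      have := le_max_right X 0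
      linarith
    set c : ℝ := L + ε / 2 with hcdef
    have hcpos : 0 < c := by positivity
    set h : ℝ → ℝ :=
      fun y => M * (Ioc (0:ℝ) (x - R)).indicator (fun y => J (x - y)) y + c * J (x - y)
        with hhdef
    have hInt : Integrable h :=
      (((hJx x).indicator measurableSet_Ioc).const_mul M).add ((hJx x).const_mul c)
    have hnn : ∀ y, 0 ≤ h y := by
      intro y
      refine add_nonneg (mul_nonneg hMpos.le ?_) (mul_nonneg hcpos.le (hJnn _))
      exact Set.indicator_nonneg (fun z _ => hJnn _) y
    have hle : ∀ y ∈ Ioi (0:ℝ), J (x - y) * U y ≤ h y := by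
      intro y hy
      simp only [hhdef]
      rcases le_or_gt y (x - R) with h1 | h1
      · have hmem : y ∈ Ioc (0:ℝ) (x - R) := ⟨hy, h1⟩
        rw [Set.indicator_of_mem hmem]
        have hUy : U y ≤ M := hMU y (le_of_lt hy)
        nlinarith [hJnn (x - y), mul_le_mul_of_nonneg_left hUy (hJnn (x - y)),
          mul_nonneg hcpos.le (hJnn (x - y))]
      · have hUy : U y ≤ c := (hX y (le_trans hxX h1.le)).le
        have hind : 0 ≤ M * (Ioc (0:ℝ) (x - R)).indicator (fun y => J (x - y)) y :=
          mul_nonneg hMpos.le (Set.indicator_nonneg (fun z _ => hJnn _) y)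
        nlinarith [mul_le_mul_of_nonneg_left hUy (hJnn (x - y))]
    have step1 : (∫ y in Ioi (0:ℝ), J (x - y) * U y) ≤ ∫ y in Ioi (0:ℝ), h y := by
      refine integral_mono_of_nonneg ?_ hInt.restrict ?_
      · exact (ae_restrict_iff' measurableSet_Ioi).2
          (Eventually.of_forall fun y hy => mul_nonneg (hJnn _) (hUpos y (le_of_lt hy)).le)
      · exact (ae_restrict_iff' measurableSet_Ioi).2 (Eventually.of_forall hle)
    have step2 : (∫ y in Ioi (0:ℝ), h y) ≤ ∫ y, h y :=
      setIntegral_le_integral hInt (Eventually.of_forall hnn)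
    have step3 : (∫ y, h y) = M * (∫ z in Ioc (0:ℝ) (x - R), J (x - z)) + c := by
      rw [hhdef, integral_add (((hJx x).indicator measurableSet_Ioc).const_mul M)
        ((hJx x).const_mul c), integral_const_mul, integral_const_mul,
        integral_indicator measurableSet_Ioc, hJx1 x, mul_one]
    have step4 : (∫ z in Ioc (0:ℝ) (x - R), J (x - z)) ≤ ε / (2 * M) := by
      have hRx : R ≤ x := by linarith
      have e1 : (∫ z in Ioc (0:ℝ) (x - R), J (x - z)) = ∫ z in (0:ℝ)..(x - R), J (x - z) :=
        (intervalIntegral.integral_of_le hx0).symm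
      have e2 : (∫ z in (0:ℝ)..(x - R), J (x - z)) = ∫ z in (x - (x - R))..(x - 0), J z :=
        intervalIntegral.integral_comp_sub_left J x
      have e3 : (∫ z in (x - (x - R))..(x - 0), J z) = ∫ z in Ioc R x, J z := by
        rw [show x - (x - R) = R by ring, sub_zero, intervalIntegral.integral_of_le hRx]
      have e4 : (∫ z in Ioc R x, J z) ≤ ∫ z in Ioi R, J z :=
        setIntegral_mono_set hJint.integrableOn (Eventually.of_forall hJnn)
          (HasSubset.Subset.eventuallyLE Ioc_subset_Ioi_self)
      rw [e1, e2, e3]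
      exact e4.trans hRtail.le
    have hMε : M * (ε / (2 * M)) = ε / 2 := by
      field_simp
    have hfin : (∫ y in Ioi (0:ℝ), J (x - y) * U y) ≤ M * (ε / (2 * M)) + c :=
      step1.trans (step2.trans (step3.le.trans
        (add_le_add (mul_le_mul_of_nonneg_left step4 hMpos.le) (le_refl c))))
    rw [hMε] at hfin
    simp only [hcdef] at hfin
    linarith
  -- key inequality for small ε
  have key : ∀ ε : ℝ, 0 < ε → ε < L →
      d * (L - ε) + lam * (L - ε) ^ 2 - (L + ε) * (kinf + ε) ≤ d * (L + ε) := by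
    intro ε hε hεL
    have h1 := claimA ε hε
    have h2 : ∀ᶠ x in atTop, U x < L + ε := eventually_lt_of_limsup_lt (by linarith) hbddU
    have h3 : ∀ᶠ x in atTop, k x < kinf + ε := hklim.eventually_lt_const (by linarith)
    have h4 : ∃ᶠ x in atTop, L - ε < U x := frequently_lt_of_lt_limsup hcobU (by linarith)
    obtain ⟨x, hxa, ⟨hF, hU⟩, hk3, hx0⟩ :=
      (h4.and_eventually ((h1.and h2).and (h3.and (eventually_ge_atTop (0:ℝ))))).exists
    have heq := hUeq x hx0
    have hFx : d * (∫ y in Ioi (0:ℝ), J (x - y) * U y)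
        = d * U x + lam * (U x) ^ 2 - U x * k x := by
      nlinarith [heq]
    have hkx : 0 < k x := lt_of_lt_of_le hm (hmk x hx0)
    have hUx : 0 < U x := hUpos x hx0
    have hA : d * (L - ε) ≤ d * U x := by nlinarith
    have hB : lam * (L - ε) ^ 2 ≤ lam * (U x) ^ 2 :=
      mul_le_mul_of_nonneg_left (pow_le_pow_left₀ (by linarith) hxa.le 2) hlam.le
    have hC : U x * k x ≤ (L + ε) * (kinf + ε) := by nlinarith
    have hD : d * (∫ y in Ioi (0:ℝ), J (x - y) * U y) ≤ d * (L + ε) := by nlinarith [hF]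
    linarith [hFx.ge, hFx.le]
  -- pass to the limit ε → 0⁺
  have hfinal : d * L + lam * L ^ 2 - L * kinf ≤ d * L := by
    have cont1 : Tendsto (fun ε : ℝ => d * (L - ε) + lam * (L - ε) ^ 2 - (L + ε) * (kinf + ε))
        (𝓝[>] (0:ℝ)) (𝓝 (d * L + lam * L ^ 2 - L * kinf)) := by
      have hc : Continuous (fun ε : ℝ => d * (L - ε) + lam * (L - ε) ^ 2 - (L + ε) * (kinf + ε)) := by
        fun_prop
      exact (hc.tendsto' 0 _ (by norm_num)).mono_left nhdsWithin_le_nhds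
    have cont2 : Tendsto (fun ε : ℝ => d * (L + ε)) (𝓝[>] (0:ℝ)) (𝓝 (d * L)) := by
      have hc : Continuous (fun ε : ℝ => d * (L + ε)) := by fun_prop
      exact (hc.tendsto' 0 _ (by norm_num)).mono_left nhdsWithin_le_nhds
    have hev : ∀ᶠ ε in 𝓝[>] (0:ℝ),
        d * (L - ε) + lam * (L - ε) ^ 2 - (L + ε) * (kinf + ε) ≤ d * (L + ε) := by
      have hmem : Iio L ∈ 𝓝[>] (0:ℝ) :=
        mem_nhdsWithin_of_mem_nhds (Iio_mem_nhds hLpos)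
      filter_upwards [hmem, self_mem_nhdsWithin] with ε hε1 hε2
      exact key ε hε2 hε1
    exact le_of_tendsto_of_tendsto cont1 cont2 hev
  have e1 : lam * L ^ 2 = lam * L * L := by ring
  have e2 : L * kinf = kinf * L := by ring
  have h2 : lam * L * L ≤ kinf * L := by linarith
  have hlamL : lam * L ≤ kinf := le_of_mul_le_mul_right h2 hLpos
  rw [le_div_iff₀ hlam]
  linarith [hlamL, mul_comm L lam]
end
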